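/- The sequence V_d = max_{v ≠ 0} (‖v‖₁/‖v‖₂)·vol_{d-1}(C^d ∩ v^⊥) is non-decreasing in d: V_d ≤ V_{d+1} for all d ≥ 2. -/

import Mathlib

open MeasureTheory Real Filter
open scoped ENNReal NNReal

noncomputable def cube (d : ℕ) : Set (EuclideanSpace ℝ (Fin d)) :=
  {x | ∀ i, |x i| ≤ 1 / 2}

noncomputable def hvol (d : ℕ) (S : Set (EuclideanSpace ℝ (Fin d))) : ℝ :=
  (μH[(d : ℝ) - 1] S).toReal

def perp {d : ℕ} (v : EuclideanSpace ℝ (Fin d)) : Set (EuclideanSpace ℝ (Fin d)) :=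
  {x | (inner ℝ x v : ℝ) = 0}

noncomputable def secVol (d : ℕ) (v : EuclideanSpace ℝ (Fin d)) : ℝ :=
  hvol d (cube d ∩ perp v)

noncomputable def l1 {d : ℕ} (v : EuclideanSpace ℝ (Fin d)) : ℝ := ∑ i, |v i|

noncomputable def ones (d : ℕ) : EuclideanSpace ℝ (Fin d) := WithLp.toLp 2 (fun _ => 1)

noncomputable def sinc (d : ℕ) : ℝ := (2 / π) * ∫ t in Set.Ioi (0 : ℝ), (Real.sin t / t) ^ d

lemma lip_eval {n : ℕ} (i : Fin n) :
    LipschitzWith 1 (fun x : EuclideanSpace ℝ (Fin n) => x i) := by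
  refine LipschitzWith.of_dist_le_mul fun x y => ?_
  rw [NNReal.coe_one, one_mul, EuclideanSpace.dist_eq]
  have h1 : dist (x i) (y i) = Real.sqrt (dist (x i) (y i) ^ 2) :=
    (Real.sqrt_sq dist_nonneg).symm
  rw [h1]
  exact Real.sqrt_le_sqrt (Finset.single_le_sum (f := fun j => dist (x j) (y j) ^ 2)
    (fun j _ => sq_nonneg _) (Finset.mem_univ i))

noncomputable def projE (d : ℕ) (x : EuclideanSpace ℝ (Fin (d+1))) : EuclideanSpace ℝ (Fin d) :=
  WithLp.toLp 2 (fun i : Fin d => x i.castSucc)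

lemma lip_proj {d : ℕ} : LipschitzWith 1 (projE d) := by
  refine LipschitzWith.of_dist_le_mul fun x y => ?_
  rw [NNReal.coe_one, one_mul,
    EuclideanSpace.dist_eq (projE d x) (projE d y),
    EuclideanSpace.dist_eq x y]
  apply Real.sqrt_le_sqrt
  rw [Fin.sum_univ_castSucc]
  exact le_add_of_nonneg_right (sq_nonneg _)

lemma cube_subset_ball (n : ℕ) : cube n ⊆ Metric.closedBall (0 : EuclideanSpace ℝ (Fin n)) n := by
  intro x hx
  rw [Metric.mem_closedBall, dist_zero_right, EuclideanSpace.norm_eq]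
  have h1 : ∑ i, ‖x i‖ ^ 2 ≤ (n : ℝ) ^ 2 := by
    calc ∑ i, ‖x i‖ ^ 2 ≤ ∑ _i : Fin n, (1:ℝ) := by
          refine Finset.sum_le_sum fun i _ => ?_
          have := hx i
          rw [Real.norm_eq_abs]
          nlinarith [abs_nonneg (x i)]
      _ = (n : ℝ) := by simp
      _ ≤ (n:ℝ)^2 := by exact_mod_cast Nat.le_self_pow (by norm_num) n
  calc Real.sqrt (∑ i, ‖x i‖ ^ 2) ≤ Real.sqrt ((n:ℝ)^2) := Real.sqrt_le_sqrt h1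
    _ = n := Real.sqrt_sq (Nat.cast_nonneg n)

noncomputable def snocE (d : ℕ) (v : EuclideanSpace ℝ (Fin d)) :
    EuclideanSpace ℝ (Fin (d+1)) := WithLp.toLp 2 (Fin.snoc v.ofLp 0 : Fin (d+1) → ℝ)

lemma snoc_mem {d : ℕ} (v : EuclideanSpace ℝ (Fin d)) {x : EuclideanSpace ℝ (Fin d)} {τ : ℝ}
    (hx : x ∈ cube d ∩ perp v) (hτ : τ ∈ Set.Icc (-(1/2) : ℝ) (1/2)) :
    (WithLp.toLp 2 (Fin.snoc x.ofLp τ : Fin (d+1) → ℝ) : EuclideanSpace ℝ (Fin (d+1))) ∈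
      cube (d+1) ∩ perp (snocE d v) := by
  constructor
  · intro i
    refine Fin.lastCases ?_ ?_ i
    · simpa [Fin.snoc_last] using abs_le.2 ⟨hτ.1, hτ.2⟩
    · intro j
      simpa [Fin.snoc_castSucc] using hx.1 j
  · have h2 := hx.2
    simp only [perp, Set.mem_setOf_eq, PiLp.inner_apply, RCLike.inner_apply,
      conj_trivial, snocE] at h2 ⊢
    rw [Fin.sum_univ_castSucc]
    simp [Fin.snoc_castSucc, Fin.snoc_last, h2]

lemma key (d : ℕ) (hd : 2 ≤ d) (v : EuclideanSpace ℝ (Fin d)) :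
    μH[(d:ℝ)-1] (cube d ∩ perp v) ≤
      μH[((d+1 : ℕ):ℝ)-1] (cube (d+1) ∩ perp (snocE d v)) := by
  classical
  have hexp : ((d+1 : ℕ):ℝ) - 1 = (d:ℝ) := by push_cast; ring
  rw [hexp]
  have hd1 : (0:ℝ) < (d:ℝ) - 1 := by
    have : (2:ℝ) ≤ d := by exact_mod_cast hd
    linarith
  set A := cube d ∩ perp v with hA
  set At := cube (d+1) ∩ perp (snocE d v) with hAt
  rw [Measure.hausdorffMeasure_apply, Measure.hausdorffMeasure_apply]
  refine iSup₂_le fun r hr => ?_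
  set r' : ℝ≥0∞ := min r 1 with hr'def
  have hr'pos : 0 < r' := lt_min hr zero_lt_one
  refine le_iSup₂_of_le r' hr'pos ?_
  refine le_iInf fun t => le_iInf fun htcov => le_iInf fun htd => ?_
  set I : Set ℝ := Set.Icc (-(1/2):ℝ) (1/2) with hI
  set J : ℕ → Set ℝ :=
    fun n => closure ((fun y : EuclideanSpace ℝ (Fin (d+1)) => y (Fin.last d)) '' t n) with hJ
  set F : ℕ → ℝ≥0∞ := fun n => EMetric.diam (t n) ^ ((d:ℝ)-1) with hF
  have hJm : ∀ n, MeasurableSet (J n) := fun n => isClosed_closure.measurableSet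
  have hvolI : volume I = 1 := by rw [hI, Real.volume_Icc]; norm_num
  have hdiamJ : ∀ n, volume (J n) ≤ EMetric.diam (t n) := by
    intro n
    refine (Real.volume_le_diam _).trans ?_
    rw [hJ]
    simp only []
    rw [EMetric.diam_closure]
    simpa [EMetric.diam] using (lip_eval (Fin.last d)).ediam_image_le (t n)
  set c : ℝ≥0∞ := ⨅ (u : ℕ → Set (EuclideanSpace ℝ (Fin d))) (_ : A ⊆ ⋃ n, u n)
      (_ : ∀ n, EMetric.diam (u n) ≤ r),
      ∑' n, ⨆ _ : (u n).Nonempty, EMetric.diam (u n) ^ ((d:ℝ)-1) with hc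
  have step1 : ∀ τ ∈ I, c ≤ ∑' n, (J n).indicator (fun _ => F n) τ := by
    intro τ hτ
    rw [hI] at hτ
    set u : ℕ → Set (EuclideanSpace ℝ (Fin d)) :=
      fun n => if τ ∈ J n then projE d '' t n else ∅ with hu
    have hcov : A ⊆ ⋃ n, u n := by
      intro x hx
      have hy : (WithLp.toLp 2 (Fin.snoc x.ofLp τ : Fin (d+1) → ℝ) : EuclideanSpace ℝ (Fin (d+1))) ∈ At := snoc_mem v hx hτ
      obtain ⟨n, hn⟩ := Set.mem_iUnion.1 (htcov hy)
      have hτJ : τ ∈ J n := subset_closure ⟨_, hn, by simp [Fin.snoc_last]⟩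
      refine Set.mem_iUnion.2 ⟨n, ?_⟩
      rw [hu]; simp only [if_pos hτJ]
      exact ⟨_, hn, by ext i; simp [projE, Fin.snoc_castSucc]⟩
    have hud : ∀ n, EMetric.diam (u n) ≤ r := by
      intro n
      rw [hu]; simp only []
      split_ifs
      · refine le_trans ?_ (le_trans (htd n) (min_le_left _ _))
        simpa [EMetric.diam] using (lip_proj (d := d)).ediam_image_le (t n)
      · simp [EMetric.diam]
    refine le_trans (iInf₂_le_of_le u hcov (iInf_le_of_le hud le_rfl)) ?_
    refine ENNReal.tsum_le_tsum fun n => ?_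
    by_cases hτJ : τ ∈ J n
    · rw [Set.indicator_of_mem hτJ]
      refine iSup_le fun _ => ?_
      rw [hu]; simp only [if_pos hτJ]
      rw [hF]
      refine ENNReal.rpow_le_rpow ?_ (le_of_lt hd1)
      simpa [EMetric.diam] using (lip_proj (d := d)).ediam_image_le (t n)
    · rw [Set.indicator_of_notMem hτJ, hu]
      simp [hτJ]
  have hgm : Measurable fun τ => ∑' n, (J n).indicator (fun _ => F n) τ :=
    Measurable.ennreal_tsum fun n => Measurable.indicator measurable_const (hJm n)
  have hterm : ∀ n, F n * volume (J n ∩ I) ≤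
      ⨆ _ : (t n).Nonempty, EMetric.diam (t n) ^ (d:ℝ) := by
    intro n
    rcases Set.eq_empty_or_nonempty (t n) with h | h
    · have hJe : J n = ∅ := by rw [hJ]; simp [h]
      simp [hJe]
    · rw [iSup_pos h]
      have h1 : volume (J n ∩ I) ≤ EMetric.diam (t n) :=
        le_trans (measure_mono Set.inter_subset_left) (hdiamJ n)
      rcases eq_or_ne (EMetric.diam (t n)) 0 with h0 | h0
      · rw [hF]; simp [h0, ENNReal.zero_rpow_of_pos hd1]
      · have htop : EMetric.diam (t n) ≠ ⊤ :=
          ne_top_of_le_ne_top (by simp) ((htd n).trans (min_le_right r 1))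
        calc F n * volume (J n ∩ I) ≤ F n * EMetric.diam (t n) := mul_le_mul_right h1 _
          _ = EMetric.diam (t n) ^ ((d:ℝ)-1) * EMetric.diam (t n) ^ (1:ℝ) := by
              rw [hF, ENNReal.rpow_one]
          _ = EMetric.diam (t n) ^ (((d:ℝ)-1) + 1) := (ENNReal.rpow_add _ _ h0 htop).symm
          _ = EMetric.diam (t n) ^ (d:ℝ) := by ring_nf
  calc c = c * volume I := by rw [hvolI, mul_one]
    _ = ∫⁻ _τ in I, c ∂volume := (setLIntegral_const I c).symm
    _ ≤ ∫⁻ τ in I, ∑' n, (J n).indicator (fun _ => F n) τ ∂volume := setLIntegral_mono hgm step1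
    _ = ∑' n, ∫⁻ τ in I, (J n).indicator (fun _ => F n) τ ∂volume :=
        lintegral_tsum fun n => (Measurable.indicator measurable_const (hJm n)).aemeasurable
    _ = ∑' n, F n * volume (J n ∩ I) := by
        refine tsum_congr fun n => ?_
        rw [lintegral_indicator (hJm n), setLIntegral_const, Measure.restrict_apply (hJm n)]
    _ ≤ ∑' n, ⨆ _ : (t n).Nonempty, EMetric.diam (t n) ^ (d:ℝ) :=
        ENNReal.tsum_le_tsum hterm

lemma bound_exists (n : ℕ) (hn : 1 ≤ n) :
    ∃ C : ℝ≥0∞, C ≠ ⊤ ∧ ∀ u : EuclideanSpace ℝ (Fin n), u ≠ 0 →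
      μH[(n:ℝ)-1] (cube n ∩ perp u) ≤ C := by
  classical
  set m := n - 1 with hm
  have hs : ((m:ℕ):ℝ) = (n:ℝ) - 1 := by rw [hm, Nat.cast_sub hn]; norm_num
  have hs0 : (0:ℝ) ≤ (m:ℝ) := Nat.cast_nonneg m
  have hpi : (μH[(m:ℝ)] : Measure (Fin m → ℝ)) = volume := by
    simpa using MeasureTheory.hausdorffMeasure_pi_real (ι := Fin m)
  set K : ℝ≥0 := (Fintype.card (Fin m) : ℝ≥0) ^ (1 / (2:ℝ≥0∞)).toReal with hK
  refine ⟨(K:ℝ≥0∞) ^ (m:ℝ) * volume (Metric.closedBall (0 : Fin m → ℝ) n), ?_, ?_⟩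
  · exact ENNReal.mul_ne_top (ENNReal.rpow_lt_top_of_nonneg hs0 ENNReal.coe_ne_top).ne
      measure_closedBall_lt_top.ne
  intro u hu
  rw [← hs]
  set P : Submodule ℝ (EuclideanSpace ℝ (Fin n)) := (ℝ ∙ u)ᗮ with hP
  have hperp : perp u = (P : Set (EuclideanSpace ℝ (Fin n))) := by
    ext x
    simp only [perp, Set.mem_setOf_eq, hP, SetLike.mem_coe,
      Submodule.mem_orthogonal_singleton_iff_inner_right]
    constructor
    · intro h; rw [real_inner_comm]; exact h
    · intro h; rw [real_inner_comm]; exact h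
  have hfin : Module.finrank ℝ P = m := by
    have h1 := Submodule.finrank_add_finrank_orthogonal (K := (ℝ ∙ u))
    rw [finrank_span_singleton hu, finrank_euclideanSpace_fin] at h1
    rw [hP]
    omega
  set e : P ≃ₗᵢ[ℝ] EuclideanSpace ℝ (Fin m) :=
    ((stdOrthonormalBasis ℝ P).reindex (finCongr hfin)).repr with he
  set S := cube n ∩ perp u with hS
  have hSP : S ⊆ (P : Set (EuclideanSpace ℝ (Fin n))) := by
    rw [hS, hperp]; exact Set.inter_subset_right
  have hSb : ∀ x ∈ S, ‖x‖ ≤ (n:ℝ) := by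
    intro x hx
    have h2 := cube_subset_ball n hx.1
    rwa [Metric.mem_closedBall, dist_zero_right] at h2
  set B : Set P := (Subtype.val) ⁻¹' S with hB
  have him : Subtype.val '' B = S := by
    rw [hB, Set.image_preimage_eq_inter_range, Subtype.range_coe]
    exact Set.inter_eq_self_of_subset_left hSP
  have hiso1 : Isometry ((Subtype.val) : P → EuclideanSpace ℝ (Fin n)) := fun x y => rfl
  calc μH[(m:ℝ)] S = μH[(m:ℝ)] (Subtype.val '' B) := by rw [him]
    _ = μH[(m:ℝ)] B := hiso1.hausdorffMeasure_image (Or.inl hs0) B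
    _ = μH[(m:ℝ)] (e '' B) := (e.isometry.hausdorffMeasure_image (Or.inl hs0) B).symm
    _ ≤ μH[(m:ℝ)] (Metric.closedBall (0 : EuclideanSpace ℝ (Fin m)) n) := by
        refine measure_mono ?_
        rintro _ ⟨b, hb, rfl⟩
        rw [Metric.mem_closedBall, dist_zero_right, e.norm_map]
        simpa using hSb _ hb
    _ ≤ (K:ℝ≥0∞) ^ (m:ℝ) * volume (Metric.closedBall (0 : Fin m → ℝ) n) := by
        have hball : Metric.closedBall (0 : EuclideanSpace ℝ (Fin m)) n =
            (WithLp.equiv 2 (Fin m → ℝ)).symm ''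
              ((WithLp.equiv 2 (Fin m → ℝ)) ''
                Metric.closedBall (0 : EuclideanSpace ℝ (Fin m)) n) := by
          rw [Set.image_image]; simp
        rw [hball]
        have hanti := PiLp.antilipschitzWith_ofLp 2 (fun _ : Fin m => ℝ)
        have hlip : LipschitzWith K ((WithLp.equiv 2 (Fin m → ℝ)).symm) :=
          hanti.to_rightInverse (fun x => (WithLp.equiv 2 (Fin m → ℝ)).apply_symm_apply x)
        refine le_trans (hlip.hausdorffMeasure_image_le hs0 _) ?_
        refine mul_le_mul_right ?_ _
        rw [hpi]
        refine measure_mono ?_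
        rintro _ ⟨x, hx, rfl⟩
        rw [Metric.mem_closedBall, dist_zero_right] at hx ⊢
        have h3 := (PiLp.lipschitzWith_ofLp 2 (fun _ : Fin m => ℝ)).dist_le_mul x 0
        rw [NNReal.coe_one, one_mul] at h3
        simp only [dist_zero_right] at h3
        calc ‖(WithLp.equiv 2 (Fin m → ℝ)) x‖ ≤ ‖x‖ := by simpa using h3
          _ ≤ n := hx

lemma coord_le {n : ℕ} (u : EuclideanSpace ℝ (Fin n)) (i : Fin n) : |u i| ≤ ‖u‖ := by
  have h := (lip_eval i).dist_le_mul u 0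
  rw [NNReal.coe_one, one_mul, dist_zero_right] at h
  simpa [Real.dist_eq] using h

theorem Vd_monotone (d : ℕ) (hd : 2 ≤ d) :
    sSup {r : ℝ | ∃ v : EuclideanSpace ℝ (Fin d), v ≠ 0 ∧
        r = (l1 v / ‖v‖) * secVol d v} ≤
      sSup {r : ℝ | ∃ v : EuclideanSpace ℝ (Fin (d + 1)), v ≠ 0 ∧
        r = (l1 v / ‖v‖) * secVol (d + 1) v} := by
  obtain ⟨C, hCtop, hC⟩ := bound_exists (d+1) (by omega)
  have hC' : ∀ w : EuclideanSpace ℝ (Fin (d+1)), w ≠ 0 → secVol (d+1) w ≤ C.toReal := by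
    intro w hw
    exact ENNReal.toReal_mono hCtop (hC w hw)
  have hbddT : BddAbove {r : ℝ | ∃ v : EuclideanSpace ℝ (Fin (d + 1)), v ≠ 0 ∧
      r = (l1 v / ‖v‖) * secVol (d + 1) v} := by
    refine ⟨((d:ℝ)+1) * C.toReal, ?_⟩
    rintro r ⟨w, hw, rfl⟩
    have h1 : l1 w / ‖w‖ ≤ (d:ℝ)+1 := by
      rw [div_le_iff₀ (norm_pos_iff.mpr hw)]
      calc l1 w = ∑ i, |w i| := rfl
        _ ≤ ∑ _i : Fin (d+1), ‖w‖ := Finset.sum_le_sum fun i _ => coord_le w i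
        _ = ((d:ℝ)+1) * ‖w‖ := by
            rw [Finset.sum_const, Finset.card_univ, Fintype.card_fin, nsmul_eq_mul]
            push_cast; ring
    have h1' : 0 ≤ l1 w / ‖w‖ :=
      div_nonneg (Finset.sum_nonneg fun i _ => abs_nonneg _) (norm_nonneg _)
    have h0 : 0 ≤ secVol (d+1) w := ENNReal.toReal_nonneg
    exact mul_le_mul h1 (hC' w hw) h0 (by positivity)
  have hone : (ones d) ≠ 0 := by
    intro h
    have h0 := congrArg (fun w : EuclideanSpace ℝ (Fin d) => w (⟨0, by omega⟩ : Fin d)) h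
    norm_num [ones] at h0
  refine csSup_le ⟨(l1 (ones d) / ‖ones d‖) * secVol d (ones d), ⟨ones d, hone, rfl⟩⟩ ?_
  rintro r ⟨v, hv, rfl⟩
  have hw : snocE d v ≠ 0 := by
    intro h0
    apply hv
    ext i
    have h1 := congrArg (fun w : EuclideanSpace ℝ (Fin (d+1)) => w i.castSucc) h0
    simpa [snocE, Fin.snoc_castSucc] using h1
  have hl1 : l1 (snocE d v) = l1 v := by
    simp only [l1, snocE]
    rw [Fin.sum_univ_castSucc]
    simp [Fin.snoc_castSucc, Fin.snoc_last]
  have hnorm : ‖snocE d v‖ = ‖v‖ := by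
    rw [EuclideanSpace.norm_eq, EuclideanSpace.norm_eq]
    congr 1
    rw [show (snocE d v).ofLp = (Fin.snoc v.ofLp 0 : Fin (d+1) → ℝ) from rfl, Fin.sum_univ_castSucc]
    simp [Fin.snoc_castSucc, Fin.snoc_last]
  have hsec : secVol d v ≤ secVol (d+1) (snocE d v) := by
    simp only [secVol, hvol]
    exact ENNReal.toReal_mono
      (ne_top_of_le_ne_top hCtop (hC _ hw)) (key d hd v)
  have h1' : 0 ≤ l1 v / ‖v‖ :=
    div_nonneg (Finset.sum_nonneg fun i _ => abs_nonneg _) (norm_nonneg _)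
  have hstep : (l1 v / ‖v‖) * secVol d v ≤
      (l1 (snocE d v) / ‖snocE d v‖) * secVol (d+1) (snocE d v) := by
    rw [hl1, hnorm]
    exact mul_le_mul_of_nonneg_left hsec h1'
  exact hstep.trans (le_csSup hbddT ⟨_, hw, rfl⟩)
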